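/- Let δ ∈ ℝ, 0 < r < μ, σ > 0, G > 0, set θ = (μ−r)²/(2σ²), and let p : ℝ → ℝ → ℝ be continuous. Let x₁ < x* < x₂ and let V : ℝ → ℝ be continuous on (x₁,x₂), twice continuously differentiable on (x₁,x*) and on (x*,x₂), and differentiable at x* with d := V'(x*) and with V'(x) → d as x → x* from both sides. Suppose V''(x) < 0 for x ∈ (x₁,x*), V'' has a left limit A⁻ := lim_{x↑x*} V''(x) < 0 and a right limit A⁺ := lim_{x↓x*} V''(x), and: (i) δ·V(x) = −θ·(V'(x))²/V''(x) + p(x, V'(x)) + r·x·V'(x) for all x ∈ (x₁,x*); (ii) δ·V(x) = (μ−r)·G·V'(x) + (1/2)·σ²·G²·V''(x) + p(x, V'(x)) + r·x·V'(x) for all x ∈ (x*,x₂); and (iii) −(μ−r)·d/(σ²·A⁻) = G. Then A⁺ = A⁻. -/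

import Mathlib

open Filter Set

/-- Step 5 of the proof of Theorem 3.1: at a junction point `x*` between the
unconstrained region and the constrained region (constraint level `G`), continuity of
`V` and `V'` together with the first-order condition `−(μ−r)V'(x*−)/(σ²V''(x*−)) = G`
force the one-sided limits of `V''` to agree: `A⁺ = A⁻`. -/
theorem junction_second_derivative_match
    (δ r μ σ G : ℝ) (hr : 0 < r) (hrμ : r < μ) (hσ : 0 < σ) (hG : 0 < G)
    (θ : ℝ) (hθ : θ = (μ - r) ^ 2 / (2 * σ ^ 2))
    (p : ℝ → ℝ → ℝ) (hp : Continuous (Function.uncurry p))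
    (x₁ xs x₂ : ℝ) (h₁ : x₁ < xs) (h₂ : xs < x₂)
    (V : ℝ → ℝ)
    (hVcont : ContinuousOn V (Ioo x₁ x₂))
    (hC2l : ∀ x ∈ Ioo x₁ xs, DifferentiableAt ℝ V x ∧ DifferentiableAt ℝ (deriv V) x)
    (hC2lc : ContinuousOn (deriv (deriv V)) (Ioo x₁ xs))
    (hC2r : ∀ x ∈ Ioo xs x₂, DifferentiableAt ℝ V x ∧ DifferentiableAt ℝ (deriv V) x)
    (hC2rc : ContinuousOn (deriv (deriv V)) (Ioo xs x₂))
    (hVd : DifferentiableAt ℝ V xs)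
    (d : ℝ) (hd : d = deriv V xs)
    (hdl : Tendsto (deriv V) (nhdsWithin xs (Iio xs)) (nhds d))
    (hdr : Tendsto (deriv V) (nhdsWithin xs (Ioi xs)) (nhds d))
    (hV''neg : ∀ x ∈ Ioo x₁ xs, deriv (deriv V) x < 0)
    (Am Ap : ℝ)
    (hAm : Tendsto (deriv (deriv V)) (nhdsWithin xs (Ioo x₁ xs)) (nhds Am))
    (hAmneg : Am < 0)
    (hAp : Tendsto (deriv (deriv V)) (nhdsWithin xs (Ioo xs x₂)) (nhds Ap))
    (hODEl : ∀ x ∈ Ioo x₁ xs,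
      δ * V x = -θ * (deriv V x) ^ 2 / deriv (deriv V) x
        + p x (deriv V x) + r * x * deriv V x)
    (hODEr : ∀ x ∈ Ioo xs x₂,
      δ * V x = (μ - r) * G * deriv V x
        + (1 / 2) * σ ^ 2 * G ^ 2 * deriv (deriv V) x
        + p x (deriv V x) + r * x * deriv V x)
    (hfoc : -((μ - r) * d) / (σ ^ 2 * Am) = G) :
    Ap = Am := by

  have hσ2 : σ ^ 2 ≠ 0 := by positivity
  have hAmne : Am ≠ 0 := ne_of_lt hAmneg
  have hμr : μ - r ≠ 0 := sub_ne_zero.mpr (ne_of_gt hrμ)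
  have hdne : d ≠ 0 := by
    intro h
    rw [h] at hfoc
    simp at hfoc
    nlinarith [hfoc, hG]
  -- filters
  set L := nhdsWithin xs (Ioo x₁ xs) with hL
  set R := nhdsWithin xs (Ioo xs x₂) with hR
  have hLbot : L.NeBot := by
    apply mem_closure_iff_nhdsWithin_neBot.mp
    rw [closure_Ioo (ne_of_lt h₁)]
    exact ⟨le_of_lt h₁, le_refl _⟩
  have hRbot : R.NeBot := by
    apply mem_closure_iff_nhdsWithin_neBot.mp
    rw [closure_Ioo (ne_of_lt h₂)]
    exact ⟨le_refl _, le_of_lt h₂⟩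
  have hxs : xs ∈ Ioo x₁ x₂ := ⟨h₁, h₂⟩
  have hVxsL : Tendsto V L (nhds (V xs)) := by
    have := (hVcont.continuousWithinAt hxs).tendsto
    exact this.mono_left (nhdsWithin_mono xs (fun y hy => ⟨hy.1, lt_trans hy.2 h₂⟩))
  have hVxsR : Tendsto V R (nhds (V xs)) := by
    have := (hVcont.continuousWithinAt hxs).tendsto
    exact this.mono_left (nhdsWithin_mono xs (fun y hy => ⟨lt_trans h₁ hy.1, hy.2⟩))
  have hdL : Tendsto (deriv V) L (nhds d) :=
    hdl.mono_left (nhdsWithin_mono xs (fun y hy => hy.2))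
  have hdR : Tendsto (deriv V) R (nhds d) :=
    hdr.mono_left (nhdsWithin_mono xs (fun y hy => hy.1))
  have hpL : Tendsto (fun x => p x (deriv V x)) L (nhds (p xs d)) := by
    have : Tendsto (fun x => (x, deriv V x)) L (nhds (xs, d)) :=
      (tendsto_id.mono_left nhdsWithin_le_nhds).prodMk_nhds hdL
    exact (hp.tendsto (xs, d)).comp this
  have hpR : Tendsto (fun x => p x (deriv V x)) R (nhds (p xs d)) := by
    have : Tendsto (fun x => (x, deriv V x)) R (nhds (xs, d)) :=
      (tendsto_id.mono_left nhdsWithin_le_nhds).prodMk_nhds hdR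
    exact (hp.tendsto (xs, d)).comp this
  have hxL : Tendsto (fun x : ℝ => x) L (nhds xs) := tendsto_id.mono_left nhdsWithin_le_nhds
  have hxR : Tendsto (fun x : ℝ => x) R (nhds xs) := tendsto_id.mono_left nhdsWithin_le_nhds
  -- left equation limit
  have hmemL : Ioo x₁ xs ∈ L := self_mem_nhdsWithin
  have hmemR : Ioo xs x₂ ∈ R := self_mem_nhdsWithin
  have eqL : δ * V xs = -θ * d ^ 2 / Am + p xs d + r * xs * d := by
    have h1 : Tendsto (fun x => δ * V x) L (nhds (δ * V xs)) := hVxsL.const_mul δ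
    have h2 : Tendsto (fun x => -θ * (deriv V x) ^ 2 / deriv (deriv V) x
        + p x (deriv V x) + r * x * deriv V x) L
        (nhds (-θ * d ^ 2 / Am + p xs d + r * xs * d)) := by
      exact (((((hdL.pow 2).const_mul (-θ)).div hAm hAmne).add hpL).add
        (((hxL.const_mul r)).mul hdL))
    have h3 : Tendsto (fun x => δ * V x) L
        (nhds (-θ * d ^ 2 / Am + p xs d + r * xs * d)) := by
      refine h2.congr' ?_
      filter_upwards [hmemL] with x hx
      exact (hODEl x hx).symm
    exact tendsto_nhds_unique h1 h3
  have eqR : δ * V xs = (μ - r) * G * d + (1 / 2) * σ ^ 2 * G ^ 2 * Ap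
      + p xs d + r * xs * d := by
    have h1 : Tendsto (fun x => δ * V x) R (nhds (δ * V xs)) := hVxsR.const_mul δ
    have h2 : Tendsto (fun x => (μ - r) * G * deriv V x
        + (1 / 2) * σ ^ 2 * G ^ 2 * deriv (deriv V) x
        + p x (deriv V x) + r * x * deriv V x) R
        (nhds ((μ - r) * G * d + (1 / 2) * σ ^ 2 * G ^ 2 * Ap + p xs d + r * xs * d)) := by
      exact (((hdR.const_mul ((μ - r) * G)).add (hAp.const_mul ((1 / 2) * σ ^ 2 * G ^ 2))).add
        hpR).add ((hxR.const_mul r).mul hdR)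
    have h3 : Tendsto (fun x => δ * V x) R
        (nhds ((μ - r) * G * d + (1 / 2) * σ ^ 2 * G ^ 2 * Ap + p xs d + r * xs * d)) := by
      refine h2.congr' ?_
      filter_upwards [hmemR] with x hx
      exact (hODEr x hx).symm
    exact tendsto_nhds_unique h1 h3
  -- algebra
  have key : -θ * d ^ 2 / Am = (μ - r) * G * d + (1 / 2) * σ ^ 2 * G ^ 2 * Ap := by linarith
  have hGeq : G * (σ ^ 2 * Am) = -((μ - r) * d) := by
    field_simp at hfoc
    linarith [hfoc]
  rw [hθ] at key
  have h2σ : (2 : ℝ) * σ ^ 2 ≠ 0 := by positivity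
  field_simp at key
  have h5 : 2 * (μ - r) * d * σ ^ 2 * G * (Ap - Am) = 0 := by
    linear_combination 2 * key + (2 * (μ - r) * d + 2 * σ ^ 2 * G * Ap) * hGeq
  have hne : 2 * (μ - r) * d * σ ^ 2 * G ≠ 0 :=
    mul_ne_zero (mul_ne_zero (mul_ne_zero (mul_ne_zero two_ne_zero hμr) hdne) hσ2)
      (ne_of_gt hG)
  have h6 : Ap - Am = 0 := (mul_eq_zero.mp h5).resolve_left hne
  linarith
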